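/- Let g : (0,+∞) → [0,+∞) be a measurable function and let A, A' ∈ ℝ with A' < A. If limsup_{a→+∞} (1/ln a) · limsup_{r→+∞} ∫_r^{ar} g(t)/t² dt ≥ A, then sup over all 1 ≤ r < R < +∞ of ( ∫_r^R g(t)/t² dt − A'·ln(R/r) ) = +∞. -/
import Mathlib


open MeasureTheory Filter Set

lemma aux_lt_of_inv_mul (b c : ℝ) (hc : 0 < c) (L : EReal)
    (h : (b : EReal) < (↑c⁻¹ : EReal) * L) : ((b * c : ℝ) : EReal) < L := by
  induction L using EReal.rec with
  | bot =>
      rw [EReal.mul_bot_of_pos (by exact_mod_cast inv_pos.mpr hc)] at h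
      exact absurd h (by simp)
  | coe x =>
      rw [← EReal.coe_mul, EReal.coe_lt_coe_iff] at h
      rw [EReal.coe_lt_coe_iff]
      rw [inv_mul_eq_div] at h
      exact (lt_div_iff₀ hc).mp h
  | top => exact EReal.coe_lt_top _

/-- If the upper logarithmic block-density
`limsup_{a→+∞} (1/ln a)·limsup_{r→+∞} ∫_r^{ar} g(t)/t² dt` of a nonnegative measurable
`g` on `(0,∞)` is at least `A`, then for every `A' < A` the supremum over
`1 ≤ r < R < ∞` of `∫_r^R g(t)/t² dt − A'·ln(R/r)` equals `+∞`. -/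
theorem unbounded_of_block_density
    (g : ℝ → ℝ) (hmeas : Measurable g) (hpos : ∀ t : ℝ, 0 < t → 0 ≤ g t)
    (A A' : ℝ) (hAA' : A' < A)
    (hdens : (↑A : EReal) ≤
      Filter.limsup (fun a : ℝ =>
        (↑(Real.log a)⁻¹ : EReal) *
          Filter.limsup (fun r : ℝ =>
            (↑(∫ t in Set.Ioc r (a * r), g t / t ^ 2) : EReal)) Filter.atTop)
        Filter.atTop) :
    ∀ B : ℝ, ∃ r R : ℝ, 1 ≤ r ∧ r < R ∧
      B ≤ (∫ t in Set.Ioc r R, g t / t ^ 2) - A' * Real.log (R / r) := by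
  intro B
  set δ : ℝ := (A - A') / 2 with hδdef
  have hδ : 0 < δ := by rw [hδdef]; linarith
  have h1 : ∃ᶠ a in atTop, ((A' + δ : ℝ) : EReal) <
      (↑(Real.log a)⁻¹ : EReal) * Filter.limsup (fun r : ℝ =>
        (↑(∫ t in Set.Ioc r (a * r), g t / t ^ 2) : EReal)) Filter.atTop := by
    refine Filter.frequently_lt_of_lt_limsup (by isBoundedDefault) (lt_of_lt_of_le ?_ hdens)
    exact_mod_cast (by rw [hδdef]; linarith : A' + δ < A)
  obtain ⟨a, ha_ge, ha⟩ := Filter.frequently_atTop.mp h1 (max 2 (Real.exp (B / δ)))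
  have ha2 : (2 : ℝ) ≤ a := le_trans (le_max_left _ _) ha_ge
  have hloga : 0 < Real.log a := Real.log_pos (by linarith)
  have hlogB : B ≤ δ * Real.log a := by
    have hea : Real.exp (B / δ) ≤ a := le_trans (le_max_right _ _) ha_ge
    have h3 : B / δ ≤ Real.log a := by
      have := Real.log_le_log (Real.exp_pos _) hea
      rwa [Real.log_exp] at this
    calc B = δ * (B / δ) := by field_simp
      _ ≤ δ * Real.log a := by nlinarith
  have h2 := aux_lt_of_inv_mul _ _ hloga _ ha
  have h4 : ∃ᶠ r in atTop, (((A' + δ) * Real.log a : ℝ) : EReal) <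
      (↑(∫ t in Set.Ioc r (a * r), g t / t ^ 2) : EReal) :=
    Filter.frequently_lt_of_lt_limsup (by isBoundedDefault) h2
  obtain ⟨r, hr1, hr⟩ := Filter.frequently_atTop.mp h4 1
  rw [EReal.coe_lt_coe_iff] at hr
  have hr0 : (0 : ℝ) < r := lt_of_lt_of_le one_pos hr1
  refine ⟨r, a * r, hr1, ?_, ?_⟩
  · nlinarith
  · have hRr : a * r / r = a := by field_simp
    rw [hRr]
    nlinarith
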